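/- Fix δ ∈ (0, 1/2) and ε ∈ (0, 1 − H(δ)), and set k_n = ⌈(2 log₂ n + 2 log₂ e)/(1 − H(δ) − ε)⌉ + 1. Then the probability that the Erdős–Rényi random graph G(n, 1/2) contains a vertex subset S with |S| = k_n whose induced subgraph has edge density at least 1 − δ tends to 0 as n → ∞. -/

import Mathlib

open MeasureTheory Filter

/-- The Erdős–Rényi `G(n, 1/2)` measure: the uniform probability measure on
edge-indicator functions `Sym2 (Fin n) → Bool`. -/
noncomputable def gnHalf (n : ℕ) : Measure (Sym2 (Fin n) → Bool) :=
  (PMF.uniformOfFintype (Sym2 (Fin n) → Bool)).toMeasure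

open scoped Classical in
/-- Number of edges of the graph `g` with both endpoints in `S`. -/
noncomputable def edgeCount (n : ℕ) (g : Sym2 (Fin n) → Bool) (S : Finset (Fin n)) : ℕ :=
  (Finset.univ.filter fun e : Sym2 (Fin n) =>
    g e = true ∧ ¬ e.IsDiag ∧ ∀ v ∈ e, v ∈ S).card

/-- Edge density of the subgraph induced by `S`. -/
noncomputable def density (n : ℕ) (g : Sym2 (Fin n) → Bool) (S : Finset (Fin n)) : ℝ :=
  (edgeCount n g S : ℝ) / (S.card.choose 2 : ℝ)

/-- Binary entropy function (base-2 logarithms). -/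
noncomputable def binEnt (δ : ℝ) : ℝ :=
  -δ * Real.logb 2 δ - (1 - δ) * Real.logb 2 (1 - δ)

/-- Inverse of the binary entropy function restricted to `[0, 1/2]`. -/
noncomputable def binEntInv (y : ℝ) : ℝ :=
  sSup {x : ℝ | x ∈ Set.Icc (0 : ℝ) (1/2) ∧ binEnt x ≤ y}


open scoped ENNReal
open scoped Classical

lemma w0_eq (δ : ℝ) (hδ0 : 0 < δ) (hδ2 : δ < 1/2) (m : ℕ) :
    δ ^ (δ * m) * (1 - δ) ^ ((1 - δ) * m) = (2:ℝ) ^ (-(binEnt δ) * (m:ℝ)) := by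
  have h1 : (0:ℝ) < 1 - δ := by linarith
  have hδe : (2:ℝ) ^ Real.logb 2 δ = δ := Real.rpow_logb two_pos (by norm_num) hδ0
  have h1e : (2:ℝ) ^ Real.logb 2 (1-δ) = 1-δ := Real.rpow_logb two_pos (by norm_num) h1
  have he : -(binEnt δ) * (m:ℝ)
      = Real.logb 2 δ * (δ*m) + Real.logb 2 (1-δ) * ((1-δ)*m) := by unfold binEnt; ring
  have e1 : (2:ℝ) ^ (Real.logb 2 δ * (δ*(m:ℝ))) = δ ^ (δ*(m:ℝ)) := by
    rw [Real.rpow_mul (by norm_num : (0:ℝ) ≤ 2), hδe]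
  have e2 : (2:ℝ) ^ (Real.logb 2 (1-δ) * ((1-δ)*(m:ℝ))) = (1-δ) ^ ((1-δ)*(m:ℝ)) := by
    rw [Real.rpow_mul (by norm_num : (0:ℝ) ≤ 2), h1e]
  rw [he, Real.rpow_add two_pos, e1, e2]

lemma weight_ge {δ : ℝ} (hδ0 : 0 < δ) (hδ2 : δ < 1/2) {m a : ℕ} (ham : a ≤ m)
    (ha : (1-δ) * m ≤ (a:ℝ)) :
    δ ^ (δ * m) * (1 - δ) ^ ((1 - δ) * m) ≤ (1-δ)^a * δ^(m - a) := by
  have h1 : (0:ℝ) < 1 - δ := by linarith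
  have hb : (1:ℝ) < (1-δ)/δ := (one_lt_div hδ0).2 (by linarith)
  have key : ∀ x : ℝ,
      (1-δ) ^ x * δ ^ ((m:ℝ) - x) = δ ^ (m:ℝ) * ((1-δ)/δ) ^ x := by
    intro x
    rw [Real.div_rpow h1.le hδ0.le, Real.rpow_sub hδ0]
    have := (Real.rpow_pos_of_pos hδ0 x).ne'
    field_simp
  have hcast : ((m - a : ℕ) : ℝ) = (m:ℝ) - a := by rw [Nat.cast_sub ham]
  calc δ ^ (δ * m) * (1 - δ) ^ ((1 - δ) * m)
      = (1-δ) ^ ((1-δ)*(m:ℝ)) * δ ^ ((m:ℝ) - (1-δ)*m) := by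
        rw [show (m:ℝ) - (1-δ)*m = δ*m by ring, mul_comm]
    _ ≤ (1-δ) ^ ((a:ℕ):ℝ) * δ ^ ((m:ℝ) - ((a:ℕ):ℝ)) := by
        rw [key, key]
        exact mul_le_mul_of_nonneg_left ((Real.rpow_le_rpow_left_iff hb).2 ha)
          (Real.rpow_nonneg hδ0.le _)
    _ = (1-δ)^a * δ^(m - a) := by
        rw [← hcast, Real.rpow_natCast, Real.rpow_natCast]

lemma entropy_count {ι : Type*} [DecidableEq ι] {δ : ℝ} (hδ0 : 0 < δ) (hδ2 : δ < 1/2)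
    (E : Finset ι) :
    (((E.powerset.filter (fun T => (1-δ) * E.card ≤ (T.card : ℝ))).card : ℝ))
      ≤ (2:ℝ) ^ (binEnt δ * E.card) := by
  have h1 : (0:ℝ) < 1 - δ := by linarith
  set m := E.card with hm
  have key : ∑ T ∈ E.powerset, (1-δ)^T.card * δ^(m - T.card) = (1:ℝ) := by
    have h := Finset.prod_add (fun _ : ι => (1-δ)) (fun _ : ι => δ) E
    simp only [Finset.prod_const] at h
    rw [show (1 - δ + δ) = (1:ℝ) by ring, one_pow] at h
    have h2 : ∑ T ∈ E.powerset, (1-δ)^T.card * δ^(m - T.card)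
        = ∑ T ∈ E.powerset, (1-δ)^T.card * δ^((E\T).card) :=
      Finset.sum_congr rfl (fun T hT => by
        rw [Finset.card_sdiff_of_subset (Finset.mem_powerset.1 hT)])
    rw [h2, ← h]
  set good := E.powerset.filter (fun T => (1-δ) * E.card ≤ (T.card : ℝ)) with hgood
  have hsub : good ⊆ E.powerset := Finset.filter_subset _ _
  have lower : (good.card : ℝ) * (δ ^ (δ * m) * (1 - δ) ^ ((1 - δ) * m))
      ≤ ∑ T ∈ good, (1-δ)^T.card * δ^(m - T.card) := by
    have := Finset.card_nsmul_le_sum good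
      (fun T => (1-δ)^T.card * δ^(m - T.card)) (δ ^ (δ * m) * (1 - δ) ^ ((1 - δ) * m))
      (fun T hT => by
        rw [hgood, Finset.mem_filter, Finset.mem_powerset] at hT
        exact weight_ge hδ0 hδ2 (Finset.card_le_card hT.1) hT.2)
    rwa [nsmul_eq_mul] at this
  have upper : ∑ T ∈ good, (1-δ)^T.card * δ^(m - T.card) ≤ 1 := by
    have h3 := Finset.sum_le_sum_of_subset_of_nonneg hsub
      (fun T _ _ => by positivity :
        ∀ T ∈ E.powerset, T ∉ good → 0 ≤ (1-δ)^T.card * δ^(m - T.card))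
    rw [key] at h3
    exact h3
  have hw := w0_eq δ hδ0 hδ2 m
  have hpos : (0:ℝ) < (2:ℝ) ^ (-(binEnt δ) * (m:ℝ)) := Real.rpow_pos_of_pos two_pos _
  have : (good.card : ℝ) * (2:ℝ) ^ (-(binEnt δ) * (m:ℝ)) ≤ 1 := by
    rw [← hw]; exact lower.trans upper
  have h2 : (2:ℝ) ^ (-(binEnt δ) * (m:ℝ)) = ((2:ℝ) ^ (binEnt δ * (m:ℝ)))⁻¹ := by
    rw [← Real.rpow_neg (by norm_num)]; ring_nf
  rw [h2] at this
  have hpos2 : (0:ℝ) < (2:ℝ) ^ (binEnt δ * (m:ℝ)) := Real.rpow_pos_of_pos two_pos _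
  calc (good.card : ℝ) = good.card * ((2:ℝ) ^ (binEnt δ * (m:ℝ)))⁻¹ * (2:ℝ) ^ (binEnt δ * (m:ℝ)) := by
        field_simp
    _ ≤ 1 * (2:ℝ) ^ (binEnt δ * (m:ℝ)) := mul_le_mul_of_nonneg_right this hpos2.le
    _ = (2:ℝ) ^ (binEnt δ * (m:ℝ)) := one_mul _

lemma edge_finset_card (n : ℕ) (S : Finset (Fin n)) :
    (Finset.univ.filter fun e : Sym2 (Fin n) =>
      ¬ e.IsDiag ∧ ∀ v ∈ e, v ∈ S).card = S.card.choose 2 := by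
  have h1 : (Finset.univ.filter fun e : Sym2 (Fin n) =>
      ¬ e.IsDiag ∧ ∀ v ∈ e, v ∈ S) = S.sym2.filter (fun e => ¬ e.IsDiag) := by
    ext e
    simp only [Finset.mem_filter, Finset.mem_univ, true_and, Finset.mem_sym2_iff]
    tauto
  have h2 : S.sym2.filter (fun e => e.IsDiag) = S.image Sym2.diag := by
    ext e
    induction e using Sym2.ind with
    | _ x y =>
      simp only [Finset.mem_filter, Finset.mk_mem_sym2_iff, Sym2.mk_isDiag_iff,
        Finset.mem_image]
      constructor
      · rintro ⟨⟨hx, _⟩, rfl⟩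
        exact ⟨x, hx, rfl⟩
      · rintro ⟨a, ha, h⟩
        rcases Sym2.eq_iff.mp h with ⟨rfl, rfl⟩ | ⟨rfl, rfl⟩ <;> exact ⟨⟨ha, ha⟩, rfl⟩
  have h3 := Finset.card_filter_add_card_filter_not
    (s := S.sym2) (p := fun e : Sym2 (Fin n) => e.IsDiag)
  have h4 : (S.sym2.filter (fun e => e.IsDiag)).card = S.card := by
    rw [h2, Finset.card_image_of_injective _ Sym2.diag_injective]
  have h5 := Finset.card_sym2 S
  have h6 : (S.card+1).choose 2 = S.card + S.card.choose 2 := by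
    rw [Nat.choose_succ_succ, Nat.choose_one_right]
  rw [h1]
  omega

open scoped Classical in
lemma edgeCount_eq (n : ℕ) (g : Sym2 (Fin n) → Bool) (S : Finset (Fin n)) :
    edgeCount n g S = ((Finset.univ.filter fun e : Sym2 (Fin n) =>
      ¬ e.IsDiag ∧ ∀ v ∈ e, v ∈ S).filter (fun e => g e = true)).card := by
  unfold edgeCount
  congr 1
  ext e
  simp only [Finset.mem_filter, Finset.mem_univ, true_and]
  tauto

open scoped Classical in
lemma prob_one_set (n : ℕ) {δ : ℝ} (hδ0 : 0 < δ) (hδ2 : δ < 1/2) (S : Finset (Fin n))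
    (hS : 2 ≤ S.card) :
    gnHalf n {g | 1 - δ ≤ density n g S}
      ≤ ENNReal.ofReal ((2:ℝ) ^ ((binEnt δ - 1) * (S.card.choose 2 : ℕ))) := by
  set E := (Finset.univ.filter fun e : Sym2 (Fin n) =>
      ¬ e.IsDiag ∧ ∀ v ∈ e, v ∈ S) with hE
  set N := Fintype.card (Sym2 (Fin n)) with hN
  have hEm : E.card = S.card.choose 2 := edge_finset_card n S
  have hmN : E.card ≤ N := Finset.card_le_univ E
  have hm1 : 0 < E.card := by rw [hEm]; exact Nat.choose_pos hS
  set A := Finset.univ.filter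
      (fun g : Sym2 (Fin n) → Bool => 1 - δ ≤ density n g S) with hA
  -- measure as counting
  have hcardfun : Fintype.card (Sym2 (Fin n) → Bool) = 2 ^ N := by
    rw [Fintype.card_fun, Fintype.card_bool]
  have hmeas : gnHalf n {g | 1 - δ ≤ density n g S}
      = (A.card : ℝ≥0∞) * ((2 : ℝ≥0∞) ^ N)⁻¹ := by
    rw [gnHalf, PMF.toMeasure_apply_fintype]
    simp only [Set.indicator_apply, Set.mem_setOf_eq, PMF.uniformOfFintype_apply]
    rw [← Finset.sum_filter, Finset.sum_const, ← hA, nsmul_eq_mul, hcardfun]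
    push_cast
    rfl
  -- counting bound
  set good := E.powerset.filter (fun T => (1-δ) * E.card ≤ (T.card : ℝ)) with hgood
  have hcount : A.card ≤ 2 ^ (N - E.card) * good.card := by
    apply Finset.card_le_mul_card_image_of_maps_to
      (f := fun g : Sym2 (Fin n) → Bool => E.filter (fun e => g e = true))
    · intro g hg
      rw [hA, Finset.mem_filter] at hg
      have hd := hg.2
      rw [density] at hd
      have hmpos : (0:ℝ) < ((S.card.choose 2 : ℕ) : ℝ) := by
        rw [← hEm]; exact_mod_cast hm1
      rw [le_div_iff₀ hmpos] at hd
      rw [hgood, Finset.mem_filter, Finset.mem_powerset]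
      refine ⟨Finset.filter_subset _ _, ?_⟩
      calc (1-δ) * ((E.card : ℕ):ℝ) = (1-δ) * ((S.card.choose 2 : ℕ) : ℝ) := by rw [hEm]
        _ ≤ (edgeCount n g S : ℝ) := hd
        _ = _ := by exact_mod_cast congrArg Nat.cast (edgeCount_eq n g S)
    · intro b _
      -- fiber bound
      have : (A.filter (fun g => E.filter (fun e => g e = true) = b)).card
          ≤ 2 ^ (N - E.card) := by
        have hcard2 : Fintype.card ({e : Sym2 (Fin n) // e ∉ E} → Bool)
            = 2 ^ (N - E.card) := by
          rw [Fintype.card_fun, Fintype.card_bool, Fintype.card_subtype_compl,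
            Fintype.card_coe]
        rw [← hcard2, ← Finset.card_univ]
        apply Finset.card_le_card_of_injOn
          (fun g (e : {e : Sym2 (Fin n) // e ∉ E}) => g e.1)
          (fun _ _ => Finset.mem_univ _)
        intro g hg g' hg' hrestr
        simp only [Finset.coe_filter, Set.mem_setOf_eq] at hg hg'
        funext e
        by_cases he : e ∈ E
        · have h1 : e ∈ E.filter (fun e => g e = true)
              ↔ e ∈ E.filter (fun e => g' e = true) := by rw [hg.2, hg'.2]
          simp only [Finset.mem_filter, he, true_and] at h1
          exact Bool.eq_iff_iff.mpr h1
        · exact congrFun hrestr ⟨e, he⟩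
      convert this using 2
  have hgoodcard : (good.card : ℝ) ≤ (2:ℝ) ^ (binEnt δ * E.card) :=
    entropy_count hδ0 hδ2 E
  -- real inequality
  have hEmr : ((E.card : ℕ) : ℝ) = ((S.card.choose 2 : ℕ) : ℝ) := by rw [hEm]
  have h2N : ((2:ℝ) ^ N) = (2:ℝ) ^ (N:ℝ) := by rw [Real.rpow_natCast]
  have h2Nm : ((2:ℝ) ^ (N - E.card : ℕ)) = (2:ℝ) ^ ((N:ℝ) - E.card) := by
    rw [← Real.rpow_natCast, Nat.cast_sub hmN]
  have hreal : (A.card : ℝ) * ((2:ℝ)^N)⁻¹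
      ≤ (2:ℝ) ^ ((binEnt δ - 1) * ((S.card.choose 2 : ℕ):ℝ)) := by
    have hstep : (A.card : ℝ)
        ≤ (2:ℝ) ^ (N - E.card : ℕ) * (2:ℝ) ^ (binEnt δ * E.card) := by
      calc (A.card : ℝ) ≤ ((2 ^ (N - E.card) * good.card : ℕ) : ℝ) := by
            exact_mod_cast hcount
        _ = (2:ℝ) ^ (N - E.card : ℕ) * (good.card : ℝ) := by push_cast; ring
        _ ≤ _ := mul_le_mul_of_nonneg_left hgoodcard (by positivity)
    rw [mul_inv_le_iff₀ (by positivity)]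
    calc (A.card : ℝ) ≤ (2:ℝ) ^ (N - E.card : ℕ) * (2:ℝ) ^ (binEnt δ * E.card) := hstep
      _ = (2:ℝ) ^ ((binEnt δ - 1) * ((S.card.choose 2 : ℕ):ℝ)) * (2:ℝ) ^ N := by
          rw [h2Nm, h2N, ← Real.rpow_add two_pos, ← Real.rpow_add two_pos, ← hEmr]
          congr 1
          ring
  -- transfer to ENNReal
  rw [hmeas]
  have hconv : (A.card : ℝ≥0∞) * ((2 : ℝ≥0∞) ^ N)⁻¹
      = ENNReal.ofReal ((A.card : ℝ) * ((2:ℝ)^N)⁻¹) := by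
    rw [ENNReal.ofReal_mul (by positivity), ENNReal.ofReal_natCast,
      ENNReal.ofReal_inv_of_pos (by positivity), ENNReal.ofReal_pow (by norm_num)]
    norm_num
  rw [hconv]
  exact ENNReal.ofReal_le_ofReal hreal

/-- Fix δ ∈ (0, 1/2) and ε ∈ (0, 1 − H(δ)), and set
`k_n = ⌈(2 log₂ n + 2 log₂ e)/(1 − H(δ) − ε)⌉ + 1`. Then the probability that `G(n, 1/2)`
contains a vertex subset `S` with `|S| = k_n` whose induced subgraph has edge density at
least `1 − δ` tends to 0 as `n → ∞`. -/
theorem stmt1 (δ ε : ℝ) (hδ : δ ∈ Set.Ioo 0 (1/2 : ℝ)) (hε : ε ∈ Set.Ioo 0 (1 - binEnt δ)) :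
    Tendsto (fun n : ℕ =>
        gnHalf n {g | ∃ S : Finset (Fin n),
          S.card = ⌈(2 * Real.logb 2 n + 2 * Real.logb 2 (Real.exp 1)) /
              (1 - binEnt δ - ε)⌉₊ + 1 ∧
          1 - δ ≤ density n g S})
      atTop (nhds 0) := by
  classical
  obtain ⟨hδ0, hδ2⟩ := hδ
  obtain ⟨hε0, hεH⟩ := hε
  set c₂ := 1 - binEnt δ - ε with hc₂def
  have hc₂ : 0 < c₂ := by simp only [hc₂def]; linarith
  have hlge : 0 < Real.logb 2 (Real.exp 1) := by
    apply Real.logb_pos one_lt_two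
    have := Real.add_one_lt_exp (by norm_num : (1:ℝ) ≠ 0)
    linarith
  set K : ℕ → ℕ := fun n =>
    ⌈(2 * Real.logb 2 n + 2 * Real.logb 2 (Real.exp 1)) / c₂⌉₊ + 1 with hK
  have hKpos : ∀ n : ℕ, 2 ≤ K n := by
    intro n
    have hnum : 0 < (2 * Real.logb 2 n + 2 * Real.logb 2 (Real.exp 1)) / c₂ := by
      apply div_pos _ hc₂
      have hn : 0 ≤ Real.logb 2 n := by
        rcases Nat.eq_zero_or_pos n with h | h
        · simp [h, Real.logb]
        · apply Real.logb_nonneg one_lt_two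
          exact_mod_cast h
      linarith
    have := Nat.ceil_pos.2 hnum
    simp only [hK]
    omega
  set b : ℕ → ℝ := fun n =>
    (n:ℝ) ^ (K n) * (2:ℝ) ^ ((binEnt δ - 1) * (((K n).choose 2 : ℕ) : ℝ)) with hb
  -- union bound
  have hbound : ∀ n : ℕ,
      gnHalf n {g | ∃ S : Finset (Fin n), S.card = K n ∧ 1 - δ ≤ density n g S}
        ≤ ENNReal.ofReal (b n) := by
    intro n
    set k := K n with hk
    have hsub : {g : Sym2 (Fin n) → Bool | ∃ S : Finset (Fin n),
        S.card = k ∧ 1 - δ ≤ density n g S}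
        ⊆ ⋃ S ∈ Finset.powersetCard k (Finset.univ : Finset (Fin n)),
            {g : Sym2 (Fin n) → Bool | 1 - δ ≤ density n g S} := by
      rintro g ⟨S, hcard, hden⟩
      exact Set.mem_biUnion (Finset.mem_powersetCard_univ.2 hcard) hden
    calc gnHalf n {g | ∃ S : Finset (Fin n), S.card = k ∧ 1 - δ ≤ density n g S}
        ≤ gnHalf n (⋃ S ∈ Finset.powersetCard k (Finset.univ : Finset (Fin n)),
            {g : Sym2 (Fin n) → Bool | 1 - δ ≤ density n g S}) := measure_mono hsub
      _ ≤ ∑ S ∈ Finset.powersetCard k (Finset.univ : Finset (Fin n)),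
            gnHalf n {g : Sym2 (Fin n) → Bool | 1 - δ ≤ density n g S} :=
          measure_biUnion_finset_le _ _
      _ ≤ ∑ S ∈ Finset.powersetCard k (Finset.univ : Finset (Fin n)),
            ENNReal.ofReal ((2:ℝ) ^ ((binEnt δ - 1) * ((k.choose 2 : ℕ) : ℝ))) := by
          apply Finset.sum_le_sum
          intro S hS
          have hcard : S.card = k := Finset.mem_powersetCard_univ.1 hS
          have := prob_one_set n hδ0 hδ2 S (by rw [hcard]; exact hKpos n)
          rwa [hcard] at this
      _ = ((n.choose k : ℕ) : ℝ≥0∞)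
            * ENNReal.ofReal ((2:ℝ) ^ ((binEnt δ - 1) * ((k.choose 2 : ℕ) : ℝ))) := by
          rw [Finset.sum_const, Finset.card_powersetCard, Finset.card_univ,
            Fintype.card_fin, nsmul_eq_mul]
      _ ≤ ENNReal.ofReal (b n) := by
          rw [← ENNReal.ofReal_natCast (n.choose k),
            ← ENNReal.ofReal_mul (by positivity)]
          apply ENNReal.ofReal_le_ofReal
          rw [hb]
          apply mul_le_mul_of_nonneg_right _ (by positivity)
          calc ((n.choose k : ℕ) : ℝ) ≤ ((n ^ k : ℕ) : ℝ) := by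
                exact_mod_cast Nat.choose_le_pow n k
            _ = (n:ℝ) ^ k := by push_cast; ring
  -- the real bound tends to zero
  have hbzero : Tendsto b atTop (nhds 0) := by
    have hexp : 0 < ε / c₂ := div_pos hε0 hc₂
    apply squeeze_zero' (g := fun n : ℕ => (n:ℝ) ^ (-(ε / c₂)))
    · filter_upwards with n
      positivity
    · filter_upwards [eventually_ge_atTop 2] with n hn2
      have hnpos : (0:ℝ) < n := by positivity
      have hn1 : (1:ℝ) < n := by exact_mod_cast hn2
      have hLpos : 0 < Real.logb 2 n := Real.logb_pos one_lt_two hn1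
      have hk2 : 2 ≤ K n := hKpos n
      have hkr : (1:ℝ) ≤ (K n : ℝ) := by
        have : (1:ℕ) ≤ K n := by omega
        exact_mod_cast this
      have hceil : (2 * Real.logb 2 n + 2 * Real.logb 2 (Real.exp 1)) / c₂
          ≤ (K n : ℝ) - 1 := by
        have h1 := Nat.le_ceil ((2 * Real.logb 2 n + 2 * Real.logb 2 (Real.exp 1)) / c₂)
        have h2 : (K n : ℝ) - 1
            = (⌈(2 * Real.logb 2 n + 2 * Real.logb 2 (Real.exp 1)) / c₂⌉₊ : ℝ) := by
          simp only [hK]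
          push_cast
          ring
        rw [h2]
        exact h1
      have hn2L : (n:ℝ) = (2:ℝ) ^ Real.logb 2 (n:ℝ) :=
        (Real.rpow_logb two_pos (by norm_num) hnpos).symm
      have e1 : (n:ℝ) ^ (K n) = (2:ℝ) ^ ((K n : ℝ) * Real.logb 2 n) := by
        conv_lhs => rw [hn2L]
        rw [← Real.rpow_natCast ((2:ℝ) ^ Real.logb 2 (n:ℝ)) (K n),
          ← Real.rpow_mul (by norm_num)]
        ring_nf
      have e2 : ((((K n).choose 2 : ℕ)) : ℝ) = (K n : ℝ) * ((K n : ℝ) - 1) / 2 :=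
        Nat.cast_choose_two (K := ℝ) (K n)
      have hbn : b n = (2:ℝ) ^ ((K n : ℝ) * Real.logb 2 n
          + (binEnt δ - 1) * ((K n : ℝ) * ((K n : ℝ) - 1) / 2)) := by
        simp only [hb]
        rw [e1, e2, ← Real.rpow_add two_pos]
      have hexpbound : (K n : ℝ) * Real.logb 2 n
          + (binEnt δ - 1) * ((K n : ℝ) * ((K n : ℝ) - 1) / 2)
          ≤ -(ε / c₂) * Real.logb 2 n := by
        have h1mH : binEnt δ - 1 = -(c₂ + ε) := by simp only [hc₂def]; ring
        have hcε : 0 < c₂ + ε := by linarith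
        have hA : (Real.logb 2 n + Real.logb 2 (Real.exp 1)) / c₂ ≤ ((K n : ℝ) - 1)/2 := by
          have hre : (2 * Real.logb 2 n + 2 * Real.logb 2 (Real.exp 1)) / c₂
              = 2 * ((Real.logb 2 n + Real.logb 2 (Real.exp 1)) / c₂) := by ring
          rw [hre] at hceil
          linarith
        have hprod : (c₂ + ε) * ((Real.logb 2 n + Real.logb 2 (Real.exp 1)) / c₂) * (K n : ℝ)
            ≤ (c₂ + ε) * (((K n : ℝ) - 1)/2) * (K n : ℝ) :=
          mul_le_mul_of_nonneg_right (mul_le_mul_of_nonneg_left hA hcε.le) (by linarith)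
        have hexpand : (c₂ + ε) * ((Real.logb 2 n + Real.logb 2 (Real.exp 1)) / c₂)
            = Real.logb 2 n + Real.logb 2 (Real.exp 1)
              + (ε / c₂) * (Real.logb 2 n + Real.logb 2 (Real.exp 1)) := by
          field_simp
        rw [hexpand] at hprod
        have t1 : (0:ℝ) ≤ ((K n : ℝ) - 1) * ((ε/c₂) * Real.logb 2 n) :=
          mul_nonneg (by linarith) (mul_pos hexp hLpos).le
        have t2 : (0:ℝ) ≤ (K n : ℝ) * Real.logb 2 (Real.exp 1) :=
          mul_nonneg (by linarith) hlge.le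
        have t3 : (0:ℝ) ≤ (K n : ℝ) * ((ε/c₂) * Real.logb 2 (Real.exp 1)) :=
          mul_nonneg (by linarith) (mul_pos hexp hlge).le
        rw [h1mH]
        nlinarith [hprod, t1, t2, t3]
      calc b n = (2:ℝ) ^ ((K n : ℝ) * Real.logb 2 n
            + (binEnt δ - 1) * ((K n : ℝ) * ((K n : ℝ) - 1) / 2)) := hbn
        _ ≤ (2:ℝ) ^ (-(ε / c₂) * Real.logb 2 n) :=
            (Real.rpow_le_rpow_left_iff one_lt_two).2 hexpbound
        _ = (n:ℝ) ^ (-(ε / c₂)) := by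
            conv_rhs => rw [hn2L]
            rw [← Real.rpow_mul (by norm_num)]
            ring_nf
    · exact (tendsto_rpow_neg_atTop hexp).comp tendsto_natCast_atTop_atTop
  -- combine
  apply tendsto_of_tendsto_of_tendsto_of_le_of_le (g := fun _ : ℕ => (0:ℝ≥0∞))
    (h := fun n => ENNReal.ofReal (b n)) tendsto_const_nhds
  · simpa using ENNReal.tendsto_ofReal hbzero
  · intro n; exact zero_le
  · intro n; exact hbound n
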